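/- Let P = μ_1 ⊗ ⋯ ⊗ μ_n be a product probability measure on X = Ω_1 × ⋯ × Ω_n. Let F : X → ℝ be measurable and such that for every x ∈ X there exists a = a(x) ∈ [0, ∞)^n with |a| = 1 (Euclidean norm) such that F(x) ≤ F(y) + d_a(x, y) for every y ∈ X, where d_a(x, y) = Σ_{i=1}^n a_i 1_{x_i ≠ y_i}. Then, if M is a median of F under P (i.e., P(F ≥ M) ≥ 1/2 and P(F ≤ M) ≥ 1/2), for every r ≥ 0, P(|F − M| ≥ r) ≤ 4 e^{−r²/4}. -/

import Mathlib

open MeasureTheory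
open scoped Classical ENNReal
open Real

namespace TalAux

variable {n : ℕ} {Ω : Fin n → Type*}

noncomputable def ham (x y : ∀ i, Ω i) (i : Fin n) : ℝ := if x i ≠ y i then 1 else 0
lemma ham_nonneg (x y : ∀ i, Ω i) (i : Fin n) : 0 ≤ ham x y i := by unfold ham; split <;> norm_num
lemma ham_le_one (x y : ∀ i, Ω i) (i : Fin n) : ham x y i ≤ 1 := by unfold ham; split <;> norm_num
def Dset (A : Set (∀ i, Ω i)) (x : ∀ i, Ω i) : Set ℝ :=
  {c | ∃ (k : ℕ) (w : Fin k → ℝ) (ys : Fin k → ∀ i, Ω i),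
    (∀ j, 0 ≤ w j) ∧ (∑ j, w j = 1) ∧ (∀ j, ys j ∈ A) ∧
    c = ∑ i, (∑ j, w j * ham x (ys j) i) ^ 2}
noncomputable def tfun (A : Set (∀ i, Ω i)) (x : ∀ i, Ω i) : ℝ := sInf (Dset A x)
lemma Dset_nonneg {A : Set (∀ i, Ω i)} {x : ∀ i, Ω i} {c : ℝ} (hc : c ∈ Dset A x) : 0 ≤ c := by
  obtain ⟨k, w, ys, -, -, -, rfl⟩ := hc
  exact Finset.sum_nonneg fun i _ => sq_nonneg _
lemma Dset_bddBelow (A : Set (∀ i, Ω i)) (x : ∀ i, Ω i) : BddBelow (Dset A x) :=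
  ⟨0, fun c hc => Dset_nonneg hc⟩
lemma Dset_nonempty {A : Set (∀ i, Ω i)} (hA : A.Nonempty) (x : ∀ i, Ω i) :
    (Dset A x).Nonempty := by
  obtain ⟨a, ha⟩ := hA
  exact ⟨_, 1, fun _ => 1, fun _ => a, fun _ => zero_le_one, by simp, fun _ => ha, rfl⟩
lemma tfun_le {A : Set (∀ i, Ω i)} {x : ∀ i, Ω i} {c : ℝ} (hc : c ∈ Dset A x) :
    tfun A x ≤ c := csInf_le (Dset_bddBelow A x) hc

lemma tfun_nonneg (A : Set (∀ i, Ω i)) (x : ∀ i, Ω i) : 0 ≤ tfun A x :=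
  Real.sInf_nonneg fun _ hc => Dset_nonneg hc

lemma Dset_mono {A B : Set (∀ i, Ω i)} (h : A ⊆ B) (x : ∀ i, Ω i) :
    Dset A x ⊆ Dset B x := by
  rintro c ⟨k, w, ys, h1, h2, h3, rfl⟩
  exact ⟨k, w, ys, h1, h2, fun j => h (h3 j), rfl⟩

lemma tfun_mono {A B : Set (∀ i, Ω i)} (h : A ⊆ B) (hA : A.Nonempty) (x : ∀ i, Ω i) :
    tfun B x ≤ tfun A x :=
  csInf_le_csInf (Dset_bddBelow B x) (Dset_nonempty hA x) (Dset_mono h x)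

lemma sq_le_of_mem_Dset {A : Set (∀ i, Ω i)} {x : ∀ i, Ω i} {Fx K r : ℝ}
    {a : Fin n → ℝ} (ha0 : ∀ i, 0 ≤ a i) (ha1 : ∑ i, a i ^ 2 = 1)
    (hxy : ∀ y ∈ A, Fx - K ≤ ∑ i, a i * ham x y i)
    (hr : 0 ≤ r) (hrx : r ≤ Fx - K) :
    ∀ c ∈ Dset A x, r ^ 2 ≤ c := by
  rintro c ⟨k, w, ys, hw0, hw1, hys, rfl⟩
  set v : Fin n → ℝ := fun i => ∑ j, w j * ham x (ys j) i with hv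
  have h1 : Fx - K ≤ ∑ i, a i * v i := by
    have heq : Fx - K = ∑ j, w j * (Fx - K) := by
      rw [← Finset.sum_mul, hw1, one_mul]
    rw [heq]
    calc ∑ j, w j * (Fx - K) ≤ ∑ j, w j * (∑ i, a i * ham x (ys j) i) :=
          Finset.sum_le_sum fun j _ =>
            mul_le_mul_of_nonneg_left (hxy _ (hys j)) (hw0 j)
      _ = ∑ i, a i * v i := by
          simp_rw [hv, Finset.mul_sum]
          rw [Finset.sum_comm]
          congr 1; funext i; congr 1; funext j; ring
  have h2 : (∑ i, a i * v i) ^ 2 ≤ (∑ i, a i ^ 2) * (∑ i, v i ^ 2) :=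
    Finset.sum_mul_sq_le_sq_mul_sq _ _ _
  have h3 : r ^ 2 ≤ (∑ i, a i * v i) ^ 2 := by
    have h4 : r ≤ ∑ i, a i * v i := le_trans hrx h1
    nlinarith
  calc r ^ 2 ≤ (∑ i, a i * v i) ^ 2 := h3
    _ ≤ (∑ i, a i ^ 2) * (∑ i, v i ^ 2) := h2
    _ = ∑ i, v i ^ 2 := by rw [ha1, one_mul]

section Step

variable {m : ℕ} {Ξ : Fin (m + 1) → Type*}

/-- projection dropping coordinate 0 -/
def pr (x : ∀ i, Ξ i) : ∀ j : Fin m, Ξ ((0 : Fin (m+1)).succAbove j) :=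
  fun j => x ((0 : Fin (m+1)).succAbove j)

def sec (ω : Ξ 0) (A : Set (∀ i, Ξ i)) : Set (∀ j : Fin m, Ξ ((0 : Fin (m+1)).succAbove j)) :=
  {z | Fin.insertNth 0 ω z ∈ A}

def timg (A : Set (∀ i, Ξ i)) : Set (∀ j : Fin m, Ξ ((0 : Fin (m+1)).succAbove j)) := pr '' A

lemma pr_insertNth (ω : Ξ 0) (z : ∀ j : Fin m, Ξ ((0 : Fin (m+1)).succAbove j)) :
    pr (Fin.insertNth 0 ω z) = z := by
  funext j; exact Fin.insertNth_apply_succAbove 0 ω z j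

lemma sec_subset_timg {ω : Ξ 0} {A : Set (∀ i, Ξ i)} : sec ω A ⊆ timg A := by
  intro z hz
  exact ⟨Fin.insertNth 0 ω z, hz, pr_insertNth ω z⟩

lemma ham_insertNth_succAbove (ω : Ξ 0) (z : ∀ j, Ξ ((0 : Fin (m+1)).succAbove j))
    (p : ∀ i, Ξ i) (j : Fin m) :
    ham (Fin.insertNth 0 ω z) p ((0 : Fin (m+1)).succAbove j) = ham z (pr p) j := by
  unfold ham pr
  rw [Fin.insertNth_apply_succAbove]

/-- Mixing a combination from the section with a combination from the projection. -/
lemma Dset_mix {A : Set (∀ i, Ξ i)} {ω : Ξ 0} {z : ∀ j, Ξ ((0 : Fin (m+1)).succAbove j)}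
    {lam : ℝ} (h0 : 0 ≤ lam) (h1 : lam ≤ 1) {c₁ c₂ : ℝ}
    (hc₁ : c₁ ∈ Dset (sec ω A) z) (hc₂ : c₂ ∈ Dset (timg A) z) :
    ∃ c ∈ Dset A (Fin.insertNth 0 ω z), c ≤ lam * c₁ + (1 - lam) * c₂ + (1 - lam) ^ 2 := by
  classical
  obtain ⟨k₁, w₁, y₁, hw₁0, hw₁1, hy₁, rfl⟩ := hc₁
  obtain ⟨k₂, w₂, q₂, hw₂0, hw₂1, hq₂, rfl⟩ := hc₂
  -- lift points of `timg A` to `A`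
  choose p₂ hp₂A hp₂pr using fun j => hq₂ j
  set X := Fin.insertNth 0 ω z with hX
  set W : Fin (k₁ + k₂) → ℝ := Fin.append (fun j => lam * w₁ j) (fun j => (1 - lam) * w₂ j) with hW
  set Ys : Fin (k₁ + k₂) → ∀ i, Ξ i :=
    Fin.append (fun j => Fin.insertNth 0 ω (y₁ j)) p₂ with hYs
  refine ⟨∑ i, (∑ j, W j * ham X (Ys j) i) ^ 2, ⟨k₁ + k₂, W, Ys, ?_, ?_, ?_, rfl⟩, ?_⟩
  · intro j
    refine Fin.addCases (fun l => ?_) (fun r => ?_) j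
    · rw [hW, Fin.append_left]; exact mul_nonneg h0 (hw₁0 l)
    · rw [hW, Fin.append_right]; exact mul_nonneg (by linarith) (hw₂0 r)
  · rw [Fin.sum_univ_add]
    simp only [hW, Fin.append_left, Fin.append_right]
    rw [← Finset.mul_sum, ← Finset.mul_sum, hw₁1, hw₂1]; ring
  · intro j
    refine Fin.addCases (fun l => ?_) (fun r => ?_) j
    · rw [hYs, Fin.append_left]; exact hy₁ l
    · rw [hYs, Fin.append_right]; exact hp₂A r
  · -- estimate the value
    rw [Fin.sum_univ_succAbove (fun i => (∑ j, W j * ham X (Ys j) i) ^ 2) 0]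
    have hcoord0 : (∑ j, W j * ham X (Ys j) 0) ^ 2 ≤ (1 - lam) ^ 2 := by
      have hle : ∑ j, W j * ham X (Ys j) 0 ≤ 1 - lam := by
        rw [Fin.sum_univ_add]
        simp only [hW, hYs, Fin.append_left, Fin.append_right]
        have e1 : ∀ l : Fin k₁, lam * w₁ l * ham X (Fin.insertNth 0 ω (y₁ l)) 0 = 0 := by
          intro l
          have : ham X (Fin.insertNth 0 ω (y₁ l)) 0 = 0 := by
            unfold ham
            rw [hX, Fin.insertNth_apply_same, Fin.insertNth_apply_same]
            simp
          rw [this, mul_zero]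
        rw [Finset.sum_congr rfl (fun l _ => e1 l), Finset.sum_const_zero, zero_add]
        calc ∑ r, (1 - lam) * w₂ r * ham X (p₂ r) 0
            ≤ ∑ r, (1 - lam) * w₂ r * 1 := by
              refine Finset.sum_le_sum fun r _ => ?_
              exact mul_le_mul_of_nonneg_left (ham_le_one _ _ _)
                (mul_nonneg (by linarith) (hw₂0 r))
          _ = 1 - lam := by
              simp only [mul_one]
              rw [← Finset.mul_sum, hw₂1, mul_one]
      have hge : 0 ≤ ∑ j, W j * ham X (Ys j) 0 := by
        refine Finset.sum_nonneg fun j _ => mul_nonneg ?_ (ham_nonneg _ _ _)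
        refine Fin.addCases (fun l => ?_) (fun r => ?_) j
        · rw [hW, Fin.append_left]; exact mul_nonneg h0 (hw₁0 l)
        · rw [hW, Fin.append_right]; exact mul_nonneg (by linarith) (hw₂0 r)
      nlinarith
    have hcoords : ∀ i : Fin m,
        (∑ j, W j * ham X (Ys j) ((0 : Fin (m+1)).succAbove i)) ^ 2 ≤
        lam * (∑ j, w₁ j * ham z (y₁ j) i) ^ 2 + (1 - lam) * (∑ j, w₂ j * ham z (q₂ j) i) ^ 2 := by
      intro i
      have hsplit : ∑ j, W j * ham X (Ys j) ((0 : Fin (m+1)).succAbove i)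
          = lam * (∑ j, w₁ j * ham z (y₁ j) i) + (1 - lam) * (∑ j, w₂ j * ham z (q₂ j) i) := by
        rw [Fin.sum_univ_add]
        simp only [hW, hYs, Fin.append_left, Fin.append_right]
        have e1 : ∀ l : Fin k₁, ham X (Fin.insertNth 0 ω (y₁ l)) ((0 : Fin (m+1)).succAbove i)
            = ham z (y₁ l) i := by
          intro l
          rw [hX, ham_insertNth_succAbove, pr_insertNth]
        have e2 : ∀ r : Fin k₂, ham X (p₂ r) ((0 : Fin (m+1)).succAbove i)
            = ham z (q₂ r) i := by
          intro r
          rw [hX, ham_insertNth_succAbove, hp₂pr]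
        rw [show (∑ l, lam * w₁ l * ham X (Fin.insertNth 0 ω (y₁ l)) ((0 : Fin (m+1)).succAbove i))
              = ∑ l, lam * (w₁ l * ham z (y₁ l) i) from
            Finset.sum_congr rfl (fun l _ => by rw [e1 l]; ring),
          show (∑ r, (1 - lam) * w₂ r * ham X (p₂ r) ((0 : Fin (m+1)).succAbove i))
              = ∑ r, (1 - lam) * (w₂ r * ham z (q₂ r) i) from
            Finset.sum_congr rfl (fun r _ => by rw [e2 r]; ring),
          ← Finset.mul_sum, ← Finset.mul_sum]
      rw [hsplit]
      nlinarith [sq_nonneg ((∑ j, w₁ j * ham z (y₁ j) i) - (∑ j, w₂ j * ham z (q₂ j) i)),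
        mul_nonneg h0 (sub_nonneg.2 h1)]
    calc (∑ j, W j * ham X (Ys j) 0) ^ 2
          + ∑ i : Fin m, (∑ j, W j * ham X (Ys j) ((0 : Fin (m+1)).succAbove i)) ^ 2
        ≤ (1 - lam) ^ 2 + ∑ i : Fin m,
            (lam * (∑ j, w₁ j * ham z (y₁ j) i) ^ 2 + (1 - lam) * (∑ j, w₂ j * ham z (q₂ j) i) ^ 2) := by
          exact add_le_add hcoord0 (Finset.sum_le_sum fun i _ => hcoords i)
      _ = lam * ∑ i, (∑ j, w₁ j * ham z (y₁ j) i) ^ 2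
          + (1 - lam) * ∑ i, (∑ j, w₂ j * ham z (q₂ j) i) ^ 2 + (1 - lam) ^ 2 := by
          rw [Finset.sum_add_distrib, ← Finset.mul_sum, ← Finset.mul_sum]; ring

/-- Lifting a combination from the projection alone. -/
lemma Dset_shift {A : Set (∀ i, Ξ i)} {ω : Ξ 0} {z : ∀ j, Ξ ((0 : Fin (m+1)).succAbove j)}
    {c₂ : ℝ} (hc₂ : c₂ ∈ Dset (timg A) z) :
    ∃ c ∈ Dset A (Fin.insertNth 0 ω z), c ≤ c₂ + 1 := by
  classical
  obtain ⟨k₂, w₂, q₂, hw₂0, hw₂1, hq₂, rfl⟩ := hc₂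
  choose p₂ hp₂A hp₂pr using fun j => hq₂ j
  set X := Fin.insertNth 0 ω z with hX
  refine ⟨∑ i, (∑ j, w₂ j * ham X (p₂ j) i) ^ 2, ⟨k₂, w₂, p₂, hw₂0, hw₂1, hp₂A, rfl⟩, ?_⟩
  rw [Fin.sum_univ_succAbove (fun i => (∑ j, w₂ j * ham X (p₂ j) i) ^ 2) 0]
  have hcoord0 : (∑ j, w₂ j * ham X (p₂ j) 0) ^ 2 ≤ 1 := by
    have hle : ∑ j, w₂ j * ham X (p₂ j) 0 ≤ 1 := by
      calc ∑ j, w₂ j * ham X (p₂ j) 0 ≤ ∑ j, w₂ j * 1 :=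
            Finset.sum_le_sum fun j _ =>
              mul_le_mul_of_nonneg_left (ham_le_one _ _ _) (hw₂0 j)
        _ = 1 := by simp only [mul_one]; exact hw₂1
    have hge : 0 ≤ ∑ j, w₂ j * ham X (p₂ j) 0 :=
      Finset.sum_nonneg fun j _ => mul_nonneg (hw₂0 j) (ham_nonneg _ _ _)
    nlinarith
  have hcoords : ∀ i : Fin m,
      (∑ j, w₂ j * ham X (p₂ j) ((0 : Fin (m+1)).succAbove i)) ^ 2
        = (∑ j, w₂ j * ham z (q₂ j) i) ^ 2 := by
    intro i
    congr 1
    exact Finset.sum_congr rfl fun j _ => by rw [hX, ham_insertNth_succAbove, hp₂pr]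
  rw [Finset.sum_congr rfl (fun i _ => hcoords i)]
  linarith

lemma tfun_insertNth_le_mix {A : Set (∀ i, Ξ i)} {ω : Ξ 0}
    {z : ∀ j, Ξ ((0 : Fin (m+1)).succAbove j)} {lam : ℝ}
    (hsec : (sec ω A).Nonempty) (h0 : 0 ≤ lam) (h1 : lam ≤ 1) :
    tfun A (Fin.insertNth 0 ω z) ≤
      lam * tfun (sec ω A) z + (1 - lam) * tfun (timg A) z + (1 - lam) ^ 2 := by
  have htimg : (timg A).Nonempty := hsec.mono sec_subset_timg
  refine le_of_forall_pos_le_add fun ε hε => ?_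
  have hε2 : 0 < ε / 2 := by linarith
  obtain ⟨c₁, hc₁, hc₁'⟩ := Real.lt_sInf_add_pos (Dset_nonempty hsec z) hε2
  obtain ⟨c₂, hc₂, hc₂'⟩ := Real.lt_sInf_add_pos (Dset_nonempty htimg z) hε2
  obtain ⟨c, hc, hc'⟩ := Dset_mix h0 h1 hc₁ hc₂
  have := tfun_le hc
  have e1 : lam * c₁ ≤ lam * (tfun (sec ω A) z + ε / 2) :=
    mul_le_mul_of_nonneg_left (le_of_lt hc₁') h0
  have e2 : (1 - lam) * c₂ ≤ (1 - lam) * (tfun (timg A) z + ε / 2) :=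
    mul_le_mul_of_nonneg_left (le_of_lt hc₂') (by linarith)
  unfold tfun at *
  nlinarith

lemma tfun_insertNth_le_shift {A : Set (∀ i, Ξ i)} {ω : Ξ 0}
    {z : ∀ j, Ξ ((0 : Fin (m+1)).succAbove j)} (hA : A.Nonempty) :
    tfun A (Fin.insertNth 0 ω z) ≤ tfun (timg A) z + 1 := by
  have htimg : (timg A).Nonempty := by
    obtain ⟨a, ha⟩ := hA
    exact ⟨pr a, a, ha, rfl⟩
  refine le_of_forall_pos_le_add fun ε hε => ?_
  obtain ⟨c₂, hc₂, hc₂'⟩ := Real.lt_sInf_add_pos (Dset_nonempty htimg z) hε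
  obtain ⟨c, hc, hc'⟩ := Dset_shift (ω := ω) hc₂
  have := tfun_le hc
  unfold tfun at *
  linarith

end Step


lemma exp_taylor_le {s : ℝ} (h0 : 0 ≤ s) (h1 : s ≤ 1) :
    rexp s ≤ 1 + s + s ^ 2 / 2 + (2 / 9) * s ^ 3 := by
  have hb := Real.exp_bound (x := s) (by rw [abs_of_nonneg h0]; exact h1) (n := 3) (by norm_num)
  have hsum : ∑ m ∈ Finset.range 3, s ^ m / (Nat.factorial m : ℝ) = 1 + s + s ^ 2 / 2 := by
    norm_num [Finset.sum_range_succ, Nat.factorial]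
  rw [hsum, abs_of_nonneg h0] at hb
  have hb' : rexp s - (1 + s + s ^ 2 / 2) ≤ s ^ 3 * ((3 : ℕ).succ / ((Nat.factorial 3 : ℝ) * 3)) :=
    le_trans (le_abs_self _) hb
  norm_num [Nat.factorial] at hb'
  linarith

lemma key1 {t : ℝ} (h0 : 0 ≤ t) (h1 : t ≤ 1 / 2) :
    rexp (t - t ^ 2) + rexp (-t) ≤ 2 := by
  have hs0 : 0 ≤ t - t ^ 2 := by nlinarith
  have hs1 : t - t ^ 2 ≤ 1 := by nlinarith
  have e1 : rexp (t - t ^ 2) ≤ 1 + (t - t ^ 2) + (t - t ^ 2) ^ 2 / 2 + (2 / 9) * (t - t ^ 2) ^ 3 :=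
    exp_taylor_le hs0 hs1
  have hb := Real.exp_bound (x := -t) (by rw [abs_of_nonpos (by linarith)]; linarith) (n := 3)
    (by norm_num)
  have hsum : ∑ m ∈ Finset.range 3, (-t) ^ m / (Nat.factorial m : ℝ) = 1 - t + t ^ 2 / 2 := by
    norm_num [Finset.sum_range_succ, Nat.factorial]
    ring
  rw [hsum, abs_of_nonpos (by linarith : -t ≤ 0)] at hb
  have e2 : rexp (-t) ≤ 1 - t + t ^ 2 / 2 + (2 / 9) * t ^ 3 := by
    have hb' := le_trans (le_abs_self _) hb
    norm_num [Nat.factorial] at hb' ⊢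
    linarith
  have hcube : (t - t ^ 2) ^ 3 ≤ t ^ 3 := by nlinarith
  nlinarith

lemma key0 : rexp (4⁻¹) + rexp (-2⁻¹) ≤ 2 := by
  have := key1 (t := 1 / 2) (by norm_num) le_rfl
  norm_num at this ⊢
  convert this using 3 <;> norm_num

/-- The core optimization inequality, `λ = 1 + 2 log g` branch. -/
lemma key2 {g : ℝ} (h1 : rexp (-2⁻¹) ≤ g) (h2 : g ≤ 1) :
    rexp ((1 - (1 + 2 * Real.log g)) ^ 2 / 4) * g ^ (-(1 + 2 * Real.log g)) ≤ 2 - g := by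
  have hg0 : 0 < g := lt_of_lt_of_le (exp_pos _) h1
  set t : ℝ := -Real.log g with ht
  have htg : g = rexp (-t) := by rw [ht, neg_neg, Real.exp_log hg0]
  have ht0 : 0 ≤ t := by
    rw [ht]; simp only [le_neg, neg_zero]
    exact Real.log_nonpos (le_of_lt hg0) h2
  have ht1 : t ≤ 1 / 2 := by
    have : -(2⁻¹ : ℝ) ≤ Real.log g := by
      calc -(2⁻¹ : ℝ) = Real.log (rexp (-2⁻¹)) := (Real.log_exp _).symm
        _ ≤ Real.log g := Real.log_le_log (exp_pos _) h1
    rw [ht]; linarith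
  have hrpow : g ^ (-(1 + 2 * Real.log g)) = rexp (t * (1 - 2 * t)) := by
    rw [Real.rpow_def_of_pos hg0]
    congr 1
    rw [ht]; ring
  have hexp : (1 - (1 + 2 * Real.log g)) ^ 2 / 4 = t ^ 2 := by
    rw [ht]; ring
  rw [hexp, hrpow, ← Real.exp_add, htg]
  have harg : t ^ 2 + t * (1 - 2 * t) = t - t ^ 2 := by ring
  rw [harg]
  linarith [key1 ht0 ht1]



noncomputable def phi (g : ℝ) : ℝ := if rexp (-2⁻¹) ≤ g then 1 + 2 * Real.log g else 0

lemma measurable_phi : Measurable phi := by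
  unfold phi
  exact Measurable.ite (measurableSet_le measurable_const measurable_id)
    (measurable_const.add (Real.measurable_log.const_mul 2))
    measurable_const

lemma phi_nonneg {g : ℝ} (hg : g ≤ 1) : 0 ≤ phi g := by
  unfold phi
  split_ifs with h
  · have hg0 : 0 < g := lt_of_lt_of_le (exp_pos _) h
    have : -(2⁻¹ : ℝ) ≤ Real.log g := by
      calc -(2⁻¹:ℝ) = Real.log (rexp (-2⁻¹)) := (Real.log_exp _).symm
        _ ≤ Real.log g := Real.log_le_log (exp_pos _) h
    linarith
  · exact le_rfl

lemma phi_le_one {g : ℝ} (hg : g ≤ 1) : phi g ≤ 1 := by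
  unfold phi
  split_ifs with h
  · have hg0 : 0 < g := lt_of_lt_of_le (exp_pos _) h
    have : Real.log g ≤ 0 := Real.log_nonpos (le_of_lt hg0) hg
    linarith
  · norm_num



lemma key3R {ar br l : ℝ} (har : 0 < ar) (hbr : ar ≤ br) (hb1 : br ≤ 1)
    (hl : l = 1 + 2 * Real.log (ar / br)) (hge : rexp (-2⁻¹) ≤ ar / br) :
    rexp ((1 - l) ^ 2 / 4) * (ar⁻¹ ^ l * br⁻¹ ^ (1 - l)) ≤ br⁻¹ * (2 - ar / br) := by
  have hbr0 : 0 < br := lt_of_lt_of_le har hbr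
  have hg1 : ar / br ≤ 1 := (div_le_one hbr0).2 hbr
  have hkey := key2 (g := ar / br) hge hg1
  rw [← hl] at hkey
  have e1 : ar⁻¹ ^ l = ar ^ (-l) := by
    rw [Real.inv_rpow (le_of_lt har), ← Real.rpow_neg (le_of_lt har)]
  have e2 : br⁻¹ ^ (1 - l) = br ^ (l - 1) := by
    rw [Real.inv_rpow (le_of_lt hbr0), ← Real.rpow_neg (le_of_lt hbr0)]
    norm_num
  have e3 : (ar / br) ^ (-l) = ar ^ (-l) * br ^ l := by
    rw [Real.div_rpow (le_of_lt har) (le_of_lt hbr0), Real.rpow_neg (le_of_lt hbr0)]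
    field_simp
  have e4 : br ^ (l - 1) = br ^ l * br⁻¹ := by
    rw [show l - 1 = l + (-1) from by ring, Real.rpow_add hbr0, Real.rpow_neg_one]
  calc rexp ((1 - l) ^ 2 / 4) * (ar⁻¹ ^ l * br⁻¹ ^ (1 - l))
      = (rexp ((1 - l) ^ 2 / 4) * (ar / br) ^ (-l)) * br⁻¹ := by
        rw [e1, e2, e3, e4]; ring
    _ ≤ (2 - ar / br) * br⁻¹ :=
        mul_le_mul_of_nonneg_right hkey (by positivity)
    _ = br⁻¹ * (2 - ar / br) := by ring

lemma key3E {a b : ℝ≥0∞} (ha : 0 < a) (hb1 : b ≤ 1) (hab : a ≤ b) {l : ℝ}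
    (hl : l = 1 + 2 * Real.log ((a / b).toReal)) (hge : rexp (-2⁻¹) ≤ (a / b).toReal) :
    ENNReal.ofReal (rexp ((1 - l) ^ 2 / 4)) * (a⁻¹ ^ l * b⁻¹ ^ (1 - l))
      ≤ b⁻¹ * ENNReal.ofReal (2 - (a / b).toReal) := by
  have hb0 : 0 < b := lt_of_lt_of_le ha hab
  have hbne : b ≠ ⊤ := (lt_of_le_of_lt hb1 (by norm_num)).ne
  have hane : a ≠ ⊤ := (lt_of_le_of_lt (le_trans hab hb1) (by norm_num)).ne
  have har : 0 < a.toReal := ENNReal.toReal_pos ha.ne' hane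
  have hbr : 0 < b.toReal := ENNReal.toReal_pos hb0.ne' hbne
  have habr : a.toReal ≤ b.toReal := ENNReal.toReal_mono hbne hab
  have hb1r : b.toReal ≤ 1 := by
    calc b.toReal ≤ (1 : ℝ≥0∞).toReal := ENNReal.toReal_mono (by norm_num) hb1
      _ = 1 := by norm_num
  have hdiv : (a / b).toReal = a.toReal / b.toReal := ENNReal.toReal_div a b
  have einva : a⁻¹ = ENNReal.ofReal a.toReal⁻¹ := by
    rw [ENNReal.ofReal_inv_of_pos har, ENNReal.ofReal_toReal hane]
  have einvb : b⁻¹ = ENNReal.ofReal b.toReal⁻¹ := by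
    rw [ENNReal.ofReal_inv_of_pos hbr, ENNReal.ofReal_toReal hbne]
  rw [hdiv] at hl hge
  have goal : rexp ((1 - l) ^ 2 / 4) * (a.toReal⁻¹ ^ l * b.toReal⁻¹ ^ (1 - l))
      ≤ b.toReal⁻¹ * (2 - a.toReal / b.toReal) := key3R har habr hb1r hl hge
  calc ENNReal.ofReal (rexp ((1 - l) ^ 2 / 4)) * (a⁻¹ ^ l * b⁻¹ ^ (1 - l))
      = ENNReal.ofReal (rexp ((1 - l) ^ 2 / 4) * (a.toReal⁻¹ ^ l * b.toReal⁻¹ ^ (1 - l))) := by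
        rw [einva, einvb,
          ENNReal.ofReal_rpow_of_pos (by positivity), ENNReal.ofReal_rpow_of_pos (by positivity),
          ← ENNReal.ofReal_mul (by positivity), ← ENNReal.ofReal_mul (by positivity)]
    _ ≤ ENNReal.ofReal (b.toReal⁻¹ * (2 - a.toReal / b.toReal)) := ENNReal.ofReal_le_ofReal goal
    _ = b⁻¹ * ENNReal.ofReal (2 - a.toReal / b.toReal) := by
        rw [ENNReal.ofReal_mul (by positivity), ← einvb]
    _ = b⁻¹ * ENNReal.ofReal (2 - (a / b).toReal) := by rw [hdiv]

lemma key4E {u b : ℝ≥0∞} (hu : 0 < u) (hub : u ≤ b) (hb1 : b ≤ 1) :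
    b⁻¹ * (2 - u / b) ≤ u⁻¹ := by
  have hb0 : 0 < b := lt_of_lt_of_le hu hub
  have hbne : b ≠ ⊤ := (lt_of_le_of_lt hb1 (by norm_num)).ne
  have hune : u ≠ ⊤ := (lt_of_le_of_lt (le_trans hub hb1) (by norm_num)).ne
  have hur : 0 < u.toReal := ENNReal.toReal_pos hu.ne' hune
  have hbr : 0 < b.toReal := ENNReal.toReal_pos hb0.ne' hbne
  have hubr : u.toReal ≤ b.toReal := ENNReal.toReal_mono hbne hub
  have hdne : u / b ≠ ⊤ := by
    have : u / b ≤ 1 := by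
      calc u / b ≤ b / b := ENNReal.div_le_div_right hub _
        _ = 1 := ENNReal.div_self hb0.ne' hbne
    exact (lt_of_le_of_lt this (by norm_num)).ne
  have hd1 : (u / b).toReal ≤ 1 := by
    rw [ENNReal.toReal_div]
    exact (div_le_one hbr).2 hubr
  have hsub : (2 : ℝ≥0∞) - u / b = ENNReal.ofReal (2 - (u / b).toReal) := by
    have h5 : ENNReal.ofReal (2 - (u / b).toReal) + ENNReal.ofReal ((u / b).toReal) = 2 := by
      rw [← ENNReal.ofReal_add (by linarith) ENNReal.toReal_nonneg]
      norm_num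
    rw [ENNReal.ofReal_toReal hdne] at h5
    exact (ENNReal.eq_sub_of_add_eq hdne h5).symm
  have einvu : u⁻¹ = ENNReal.ofReal u.toReal⁻¹ := by
    rw [ENNReal.ofReal_inv_of_pos hur, ENNReal.ofReal_toReal hune]
  have einvb : b⁻¹ = ENNReal.ofReal b.toReal⁻¹ := by
    rw [ENNReal.ofReal_inv_of_pos hbr, ENNReal.ofReal_toReal hbne]
  have goal : b.toReal⁻¹ * (2 - u.toReal / b.toReal) ≤ u.toReal⁻¹ := by
    rw [show b.toReal⁻¹ * (2 - u.toReal / b.toReal)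
        = (2 * b.toReal - u.toReal) / (b.toReal * b.toReal) from by field_simp,
      inv_eq_one_div, div_le_div_iff₀ (by positivity) hur]
    nlinarith [sq_nonneg (b.toReal - u.toReal)]
  calc b⁻¹ * (2 - u / b)
      = ENNReal.ofReal (b.toReal⁻¹ * (2 - u.toReal / b.toReal)) := by
        rw [hsub, einvb, ENNReal.toReal_div,
          ← ENNReal.ofReal_mul (by positivity)]
    _ ≤ ENNReal.ofReal u.toReal⁻¹ := ENNReal.ofReal_le_ofReal goal
    _ = u⁻¹ := einvu.symm


universe u

set_option maxHeartbeats 2000000 in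
theorem main : ∀ (N : ℕ) (Ω : Fin N → Type u) [∀ i, MeasurableSpace (Ω i)]
    (μ : ∀ i, Measure (Ω i)) [∀ i, IsProbabilityMeasure (μ i)]
    (Y : Type u) [MeasurableSpace Y] (S : Set (Y × (∀ i, Ω i))),
    MeasurableSet S →
    ∃ G : Y → (∀ i, Ω i) → ℝ≥0∞,
      Measurable (Function.uncurry G) ∧
      ∀ y : Y, 0 < Measure.pi μ {x | (y, x) ∈ S} →
        (∀ x, ENNReal.ofReal (rexp (tfun {x | (y, x) ∈ S} x / 4)) ≤ G y x) ∧
        ∫⁻ x, G y x ∂(Measure.pi μ) ≤ (Measure.pi μ {x | (y, x) ∈ S})⁻¹ := by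
  intro N
  induction N with
  | zero =>
    intro Ω _ μ _ Y _ S hS
    refine ⟨fun _ _ => 1, measurable_const, fun y hy => ⟨?_, ?_⟩⟩
    · intro x
      have hne : {x | (y, x) ∈ S}.Nonempty := by
        rcases Set.eq_empty_or_nonempty {x | (y, x) ∈ S} with h | h
        · rw [h] at hy; simp at hy
        · exact h
      obtain ⟨x₀, hx₀⟩ := hne
      have h0 : (0:ℝ) ∈ Dset {x | (y, x) ∈ S} x :=
        ⟨1, fun _ => 1, fun _ => x₀, fun _ => zero_le_one, by simp, fun _ => hx₀, by simp⟩
      have h3 : tfun {x | (y, x) ∈ S} x = 0 := le_antisymm (tfun_le h0) (tfun_nonneg _ _)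
      rw [h3]
      norm_num
    · rw [lintegral_one, measure_univ]
      rw [ENNReal.le_inv_iff_mul_le, one_mul]
      exact prob_le_one
  | succ n IH =>
    intro Ω _ μ _ Y _ S hS
    -- the measurable equivalence splitting off coordinate 0
    set e := MeasurableEquiv.piFinSuccAbove Ω 0 with he
    set μ' : ∀ j : Fin n, Measure (Ω ((0 : Fin (n+1)).succAbove j)) :=
      fun j => μ ((0 : Fin (n+1)).succAbove j) with hμ'
    haveI : ∀ j, IsProbabilityMeasure (μ' j) := fun j => inferInstance
    set P' := Measure.pi μ' with hP'
    set μ0 := μ 0 with hμ0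
    have mp : MeasurePreserving e (Measure.pi μ) (μ0.prod P') :=
      measurePreserving_piFinSuccAbove μ 0
    have hesymm : ∀ (ω : Ω 0) (z : ∀ j : Fin n, Ω ((0 : Fin (n+1)).succAbove j)),
        e.symm (ω, z) = Fin.insertNth 0 ω z := by
      intro ω z
      rw [he, MeasurableEquiv.piFinSuccAbove_symm_apply]
      rfl
    have hesymm0 : ∀ (ω : Ω 0) z, (e.symm (ω, z)) 0 = ω := by
      intro ω z; rw [hesymm]; exact Fin.insertNth_apply_same 0 ω z
    have hesymmpr : ∀ (ω : Ω 0) z, pr (e.symm (ω, z)) = z := by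
      intro ω z; rw [hesymm]; exact pr_insertNth ω z
    -- the auxiliary sets
    have mTB : MeasurableSet {q : (Y × (∀ j : Fin n, Ω ((0 : Fin (n+1)).succAbove j))) × Ω 0 |
        (q.1.1, e.symm (q.2, q.1.2)) ∈ S} := by
      refine hS.preimage ?_
      exact (measurable_fst.fst).prodMk
        (e.symm.measurable.comp (measurable_snd.prodMk measurable_fst.snd))
    set TB : Set ((Y × (∀ j : Fin n, Ω ((0 : Fin (n+1)).succAbove j))) × Ω 0) :=
      {q | (q.1.1, e.symm (q.2, q.1.2)) ∈ S} with hTB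
    set Bset : Set (Y × (∀ j : Fin n, Ω ((0 : Fin (n+1)).succAbove j))) :=
      {p | 0 < μ0 (Prod.mk p ⁻¹' TB)} with hBset
    have mBset : MeasurableSet Bset := by
      rw [hBset]
      exact (measurable_measure_prodMk_left mTB) measurableSet_Ioi
    set S'' : Set (Y × (∀ i, Ω i)) :=
      S ∩ {q | (q.1, pr q.2) ∈ Bset} with hS''
    have mpr : Measurable (pr (Ξ := Ω)) :=
      measurable_pi_lambda _ (fun j => measurable_pi_apply _)
    have mS'' : MeasurableSet S'' :=
      hS.inter (mBset.preimage (measurable_fst.prodMk (mpr.comp measurable_snd)))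
    set T1 : Set ((Y × Ω 0) × (∀ j : Fin n, Ω ((0 : Fin (n+1)).succAbove j))) :=
      {q | (q.1.1, e.symm (q.1.2, q.2)) ∈ S''} with hT1
    have mT1 : MeasurableSet T1 := by
      refine mS''.preimage ?_
      exact (measurable_fst.fst).prodMk
        (e.symm.measurable.comp (measurable_fst.snd.prodMk measurable_snd))
    obtain ⟨G₁, hG₁m, hG₁⟩ := IH _ μ' (Y × Ω 0) T1 mT1
    obtain ⟨G₂, hG₂m, hG₂⟩ := IH _ μ' Y Bset mBset
    set α : Y × Ω 0 → ℝ≥0∞ := fun p => P' (Prod.mk p ⁻¹' T1) with hα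
    have mα : Measurable α := measurable_measure_prodMk_left mT1
    set βf : Y → ℝ≥0∞ := fun y => P' (Prod.mk y ⁻¹' Bset) with hβf
    have mβf : Measurable βf := measurable_measure_prodMk_left mBset
    set ρ : Y × Ω 0 → ℝ := fun p => (α p / βf p.1).toReal with hρ
    have mρ : Measurable ρ := (mα.div (mβf.comp measurable_fst)).ennreal_toReal
    set lamf : Y × Ω 0 → ℝ := fun p => phi (ρ p) with hlamf
    have mlamf : Measurable lamf := measurable_phi.comp mρ
    set G : Y → (∀ i, Ω i) → ℝ≥0∞ := fun y x =>
      ENNReal.ofReal (rexp ((1 - lamf (y, x 0)) ^ 2 / 4))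
        * G₁ (y, x 0) (pr x) ^ lamf (y, x 0)
        * G₂ y (pr x) ^ (1 - lamf (y, x 0)) with hG
    have mev : Measurable fun q : Y × (∀ i, Ω i) => (q.1, q.2 0) :=
      measurable_fst.prodMk ((measurable_pi_apply 0).comp measurable_snd)
    have mlam' : Measurable fun q : Y × (∀ i, Ω i) => lamf (q.1, q.2 0) := mlamf.comp mev
    have mG : Measurable (Function.uncurry G) := by
      rw [hG]
      refine Measurable.mul (Measurable.mul ?_ ?_) ?_
      · exact ((((measurable_const.sub mlam').pow_const 2).div_const 4).exp).ennreal_ofReal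
      · exact (hG₁m.comp (mev.prodMk (mpr.comp measurable_snd))).pow mlam'
      · exact (hG₂m.comp (measurable_fst.prodMk (mpr.comp measurable_snd))).pow
          (measurable_const.sub mlam')
    refine ⟨G, mG, fun y hy => ?_⟩
    -- sets for this y
    set Ay : Set (∀ i, Ω i) := {x | (y, x) ∈ S} with hAy
    set A2 : Set (∀ i, Ω i) := {x | (y, x) ∈ S''} with hA2
    set By : Set (∀ j : Fin n, Ω ((0 : Fin (n+1)).succAbove j)) := Prod.mk y ⁻¹' Bset with hBy
    have mAy : MeasurableSet Ay := hS.preimage measurable_prodMk_left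
    have mA2 : MeasurableSet A2 := mS''.preimage measurable_prodMk_left
    have mBy : MeasurableSet By := mBset.preimage measurable_prodMk_left
    have hA2sub : A2 ⊆ Ay := fun x hx => hx.1
    have hA2mem : ∀ x, x ∈ A2 ↔ x ∈ Ay ∧ pr x ∈ By := fun x => Iff.rfl
    have hByiff : ∀ z, z ∈ By ↔ 0 < μ0 {ω | Fin.insertNth 0 ω z ∈ Ay} := by
      intro z
      have h1 : Prod.mk (y, z) ⁻¹' TB = {ω | Fin.insertNth 0 ω z ∈ Ay} := by
        ext ω
        simp only [hTB, Set.mem_preimage, Set.mem_setOf_eq, hesymm, hAy]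
      constructor
      · intro h; rw [← h1]; exact h
      · intro h; show 0 < μ0 (Prod.mk (y, z) ⁻¹' TB); rw [h1]; exact h
    have hment : ∀ (C : Set (∀ i, Ω i)), MeasurableSet C →
        (μ0.prod P') (e.symm ⁻¹' C) = Measure.pi μ C := by
      intro C hC
      exact (MeasurePreserving.symm e mp).measure_preimage hC.nullMeasurableSet
    have hsecesymm : ∀ (C : Set (∀ i, Ω i)) (ω : Ω 0),
        Prod.mk ω ⁻¹' (e.symm ⁻¹' C) = {z | Fin.insertNth 0 ω z ∈ C} := by
      intro C ω; ext z
      simp only [Set.mem_preimage, Set.mem_setOf_eq, hesymm]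
    have hsecesymm2 : ∀ (C : Set (∀ i, Ω i)) (z : ∀ j : Fin n, Ω ((0 : Fin (n+1)).succAbove j)),
        (fun ω => (ω, z)) ⁻¹' (e.symm ⁻¹' C) = {ω | Fin.insertNth 0 ω z ∈ C} := by
      intro C z; ext ω
      simp only [Set.mem_preimage, Set.mem_setOf_eq, hesymm]
    have hdiff0 : Measure.pi μ (Ay \ A2) = 0 := by
      rw [← hment _ (mAy.diff mA2),
        Measure.prod_apply_symm ((mAy.diff mA2).preimage e.symm.measurable)]
      have hzero : ∀ z, μ0 ((fun ω => (ω, z)) ⁻¹' (e.symm ⁻¹' (Ay \ A2))) = 0 := by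
        intro z
        rw [hsecesymm2]
        by_cases hzB : z ∈ By
        · have : {ω | Fin.insertNth 0 ω z ∈ Ay \ A2} = ∅ := by
            ext ω
            simp only [Set.mem_setOf_eq, Set.mem_empty_iff_false, iff_false, Set.mem_diff,
              not_and, not_not]
            intro h1
            exact (hA2mem _).2 ⟨h1, by rwa [pr_insertNth]⟩
          rw [this, measure_empty]
        · have hsub : {ω | Fin.insertNth 0 ω z ∈ Ay \ A2} ⊆ {ω | Fin.insertNth 0 ω z ∈ Ay} :=
            fun ω h => h.1
          have h0 : μ0 {ω | Fin.insertNth 0 ω z ∈ Ay} = 0 := by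
            by_contra hne
            exact hzB ((hByiff z).2 (pos_iff_ne_zero.mpr hne))
          exact measure_mono_null hsub h0
      calc ∫⁻ z, μ0 ((fun ω => (ω, z)) ⁻¹' (e.symm ⁻¹' (Ay \ A2))) ∂P'
          = ∫⁻ _, 0 ∂P' := lintegral_congr hzero
        _ = 0 := lintegral_zero
    have hPA2 : Measure.pi μ A2 = Measure.pi μ Ay := by
      have h1 : Measure.pi μ Ay ≤ Measure.pi μ A2 + Measure.pi μ (Ay \ A2) := by
        refine le_trans (measure_mono ?_) (measure_union_le _ _)
        intro x hx
        by_cases h : x ∈ A2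
        · exact Set.mem_union_left _ h
        · exact Set.mem_union_right _ ⟨hx, h⟩
      rw [hdiff0, add_zero] at h1
      exact le_antisymm (measure_mono hA2sub) h1
    have hPA2pos : 0 < Measure.pi μ A2 := by rw [hPA2]; exact hy
    have hA2ne : A2.Nonempty := by
      rcases Set.eq_empty_or_nonempty A2 with h | h
      · rw [h] at hPA2pos; simp at hPA2pos
      · exact h
    have hβ1 : βf y ≤ 1 := prob_le_one
    have hβne : βf y ≠ ⊤ := lt_of_le_of_lt hβ1 (by norm_num) |>.ne
    have hA2β : Measure.pi μ A2 ≤ βf y := by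
      rw [← hment _ mA2, Measure.prod_apply_symm (mA2.preimage e.symm.measurable)]
      calc ∫⁻ z, μ0 ((fun ω => (ω, z)) ⁻¹' (e.symm ⁻¹' A2)) ∂P'
          ≤ ∫⁻ z, By.indicator 1 z ∂P' := by
            refine lintegral_mono fun z => ?_
            rw [hsecesymm2]
            by_cases hzB : z ∈ By
            · rw [Set.indicator_of_mem hzB, Pi.one_apply]
              exact prob_le_one
            · rw [Set.indicator_of_notMem hzB]
              have : {ω | Fin.insertNth 0 ω z ∈ A2} = ∅ := by
                ext ω
                simp only [Set.mem_setOf_eq, Set.mem_empty_iff_false, iff_false]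
                intro h
                exact hzB (by
                  have := ((hA2mem _).1 h).2
                  rwa [pr_insertNth] at this)
              rw [this, measure_empty]
        _ = βf y := lintegral_indicator_one mBy
    have hβpos : 0 < βf y := lt_of_lt_of_le hPA2pos hA2β
    have hByne : By.Nonempty := by
      rcases Set.eq_empty_or_nonempty By with h | h
      · exfalso
        have hz : βf y = 0 := by
          show P' (Prod.mk y ⁻¹' Bset) = 0
          rw [← hBy, h, measure_empty]
        rw [hz] at hβpos
        simp at hβpos
      · exact h
    have hBy_sub_timg : By ⊆ timg A2 := by
      intro z hz
      have h0 : 0 < μ0 {ω | Fin.insertNth 0 ω z ∈ Ay} := (hByiff z).1 hz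
      have hne : {ω | Fin.insertNth 0 ω z ∈ Ay}.Nonempty := by
        rcases Set.eq_empty_or_nonempty {ω | Fin.insertNth 0 ω z ∈ Ay} with h | h
        · rw [h] at h0; simp at h0
        · exact h
      obtain ⟨ω', hω'⟩ := hne
      have hmem : Fin.insertNth 0 ω' z ∈ A2 :=
        (hA2mem _).2 ⟨hω', by rwa [pr_insertNth]⟩
      exact ⟨_, hmem, pr_insertNth ω' z⟩
    have hαle : ∀ ω, α (y, ω) ≤ βf y := by
      intro ω
      refine measure_mono ?_
      intro z hz
      have h2 : pr (e.symm (ω, z)) ∈ By := ((hA2mem _).1 hz).2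
      rwa [hesymmpr] at h2
    have hsecT1 : ∀ ω : Ω 0, Prod.mk (y, ω) ⁻¹' T1 = sec ω A2 := by
      intro ω; ext z
      simp only [hT1, Set.mem_preimage, Set.mem_setOf_eq, sec, hesymm, hA2]
    have hρ01 : ∀ ω : Ω 0, 0 ≤ ρ (y, ω) ∧ ρ (y, ω) ≤ 1 := by
      intro ω
      refine ⟨ENNReal.toReal_nonneg, ?_⟩
      have hd : α (y, ω) / βf y ≤ 1 := by
        calc α (y, ω) / βf y ≤ βf y / βf y := ENNReal.div_le_div_right (hαle ω) _
          _ = 1 := ENNReal.div_self hβpos.ne' hβne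
      calc ρ (y, ω) ≤ (1 : ℝ≥0∞).toReal := ENNReal.toReal_mono (by norm_num) hd
        _ = 1 := by norm_num
    have hG2pt : ∀ z', ENNReal.ofReal (rexp (tfun By z' / 4)) ≤ G₂ y z' :=
      (hG₂ y hβpos).1
    have hG2int : ∫⁻ z, G₂ y z ∂P' ≤ (βf y)⁻¹ := (hG₂ y hβpos).2
    refine ⟨?_, ?_⟩
    · -- pointwise claim
      intro x
      have hl0 : 0 ≤ lamf (y, x 0) := phi_nonneg (hρ01 (x 0)).2
      have hl1 : lamf (y, x 0) ≤ 1 := phi_le_one (hρ01 (x 0)).2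
      have hx : x = Fin.insertNth 0 (x 0) (pr x) :=
        (Fin.insertNth_self_removeNth 0 x).symm
      rcases eq_or_lt_of_le hl0 with hl | hl
      · -- λ = 0
        have hchain : tfun Ay x ≤ tfun By (pr x) + 1 := by
          calc tfun Ay x ≤ tfun A2 x := tfun_mono hA2sub hA2ne x
            _ ≤ tfun (timg A2) (pr x) + 1 := by
                conv_lhs => rw [hx]
                exact tfun_insertNth_le_shift hA2ne
            _ ≤ tfun By (pr x) + 1 :=
                add_le_add_left (tfun_mono hBy_sub_timg hByne (pr x)) 1
        have hexp : rexp (tfun Ay x / 4) ≤ rexp ((1 - lamf (y, x 0)) ^ 2 / 4)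
            * rexp (tfun By (pr x) / 4) := by
          rw [← Real.exp_add]
          apply Real.exp_le_exp.2
          rw [← hl]
          norm_num
          linarith
        calc ENNReal.ofReal (rexp (tfun Ay x / 4))
            ≤ ENNReal.ofReal (rexp ((1 - lamf (y, x 0)) ^ 2 / 4)
              * rexp (tfun By (pr x) / 4)) := ENNReal.ofReal_le_ofReal hexp
          _ = ENNReal.ofReal (rexp ((1 - lamf (y, x 0)) ^ 2 / 4))
              * ENNReal.ofReal (rexp (tfun By (pr x) / 4)) :=
              ENNReal.ofReal_mul (le_of_lt (exp_pos _))
          _ ≤ G y x := by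
              rw [hG]
              simp only [← hl, ENNReal.rpow_zero, mul_one, sub_zero, ENNReal.rpow_one]
              exact mul_le_mul_right (hG2pt (pr x)) _
      · -- λ > 0
        have hif : rexp (-2⁻¹) ≤ ρ (y, x 0) ∧
            lamf (y, x 0) = 1 + 2 * Real.log (ρ (y, x 0)) := by
          by_cases hcase : rexp (-2⁻¹) ≤ ρ (y, x 0)
          · refine ⟨hcase, ?_⟩
            show phi (ρ (y, x 0)) = _
            unfold phi
            rw [if_pos hcase]
          · exfalso
            have h0 : lamf (y, x 0) = 0 := by
              show phi (ρ (y, x 0)) = 0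
              unfold phi
              rw [if_neg hcase]
            rw [h0] at hl
            exact lt_irrefl _ hl
        have hαpos : 0 < α (y, x 0) := by
          rcases eq_or_lt_of_le (zero_le : 0 ≤ α (y, x 0)) with h | h
          · exfalso
            have hρ0 : ρ (y, x 0) = 0 := by
              show (α (y, x 0) / βf y).toReal = 0
              rw [← h, ENNReal.zero_div]
              norm_num
            rw [hρ0] at hif
            have := exp_pos (-2⁻¹ : ℝ)
            linarith [hif.1]
          · exact h
        have hsecne : (sec (x 0) A2).Nonempty := by
          rcases Set.eq_empty_or_nonempty (sec (x 0) A2) with h | h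
          · exfalso
            have h0 : α (y, x 0) = 0 := by
              show P' (Prod.mk (y, x 0) ⁻¹' T1) = 0
              rw [hsecT1, h, measure_empty]
            rw [h0] at hαpos
            exact lt_irrefl _ hαpos
          · exact h
        have hG1pt : ∀ z', ENNReal.ofReal (rexp (tfun (sec (x 0) A2) z' / 4))
            ≤ G₁ (y, x 0) z' := by
          have hp := (hG₁ (y, x 0) (by
            show 0 < P' {z | ((y, x 0), z) ∈ T1}
            show 0 < P' (Prod.mk (y, x 0) ⁻¹' T1)
            exact hαpos)).1
          intro z'
          have h2 := hp z'
          rwa [show {z | ((y, x 0), z) ∈ T1} = sec (x 0) A2 from hsecT1 (x 0)] at h2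
        have hchain : tfun Ay x ≤ lamf (y, x 0) * tfun (sec (x 0) A2) (pr x)
            + (1 - lamf (y, x 0)) * tfun By (pr x) + (1 - lamf (y, x 0)) ^ 2 := by
          calc tfun Ay x ≤ tfun A2 x := tfun_mono hA2sub hA2ne x
            _ ≤ lamf (y, x 0) * tfun (sec (x 0) A2) (pr x)
                + (1 - lamf (y, x 0)) * tfun (timg A2) (pr x) + (1 - lamf (y, x 0)) ^ 2 := by
                conv_lhs => rw [hx]
                exact tfun_insertNth_le_mix hsecne hl0 hl1
            _ ≤ _ := by
                have hm := tfun_mono hBy_sub_timg hByne (pr x)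
                have h1l : (0:ℝ) ≤ 1 - lamf (y, x 0) := by linarith
                nlinarith [mul_le_mul_of_nonneg_left hm h1l]
        have hexp : rexp (tfun Ay x / 4) ≤ rexp ((1 - lamf (y, x 0)) ^ 2 / 4)
            * rexp (tfun (sec (x 0) A2) (pr x) / 4) ^ lamf (y, x 0)
            * rexp (tfun By (pr x) / 4) ^ (1 - lamf (y, x 0)) := by
          rw [← Real.exp_mul, ← Real.exp_mul, ← Real.exp_add, ← Real.exp_add]
          apply Real.exp_le_exp.2
          linarith [hchain]
        calc ENNReal.ofReal (rexp (tfun Ay x / 4))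
            ≤ ENNReal.ofReal (rexp ((1 - lamf (y, x 0)) ^ 2 / 4)
              * rexp (tfun (sec (x 0) A2) (pr x) / 4) ^ lamf (y, x 0)
              * rexp (tfun By (pr x) / 4) ^ (1 - lamf (y, x 0))) :=
              ENNReal.ofReal_le_ofReal hexp
          _ = ENNReal.ofReal (rexp ((1 - lamf (y, x 0)) ^ 2 / 4))
              * ENNReal.ofReal (rexp (tfun (sec (x 0) A2) (pr x) / 4)) ^ lamf (y, x 0)
              * ENNReal.ofReal (rexp (tfun By (pr x) / 4)) ^ (1 - lamf (y, x 0)) := by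
              rw [ENNReal.ofReal_mul (by positivity), ENNReal.ofReal_mul (le_of_lt (exp_pos _)),
                ENNReal.ofReal_rpow_of_pos (exp_pos _), ENNReal.ofReal_rpow_of_pos (exp_pos _)]
          _ ≤ G y x := by
              rw [hG]
              exact mul_le_mul' (mul_le_mul' le_rfl
                  (ENNReal.rpow_le_rpow (hG1pt (pr x)) hl0))
                (ENNReal.rpow_le_rpow (hG2pt (pr x)) (by linarith))
    · -- integral claim
      have hGy_meas : Measurable (G y) := by
        have h0 : (G y) = Function.uncurry G ∘ Prod.mk y := rfl
        rw [h0]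
        exact mG.comp measurable_prodMk_left
      have mps : MeasurePreserving e.symm (μ0.prod P') (Measure.pi μ) :=
        MeasurePreserving.symm e mp
      have h1 : ∫⁻ x, G y x ∂(Measure.pi μ) = ∫⁻ p, G y (e.symm p) ∂(μ0.prod P') :=
        (mps.lintegral_comp hGy_meas).symm
      have hGval : ∀ (ω : Ω 0) z, G y (e.symm (ω, z)) =
          ENNReal.ofReal (rexp ((1 - lamf (y, ω)) ^ 2 / 4))
            * G₁ (y, ω) z ^ lamf (y, ω) * G₂ y z ^ (1 - lamf (y, ω)) := by
        intro ω z
        rw [hG]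
        simp only [hesymm0, hesymmpr]
      have h2 : ∫⁻ p, G y (e.symm p) ∂(μ0.prod P')
          = ∫⁻ ω, ∫⁻ z, G y (e.symm (ω, z)) ∂P' ∂μ0 :=
        lintegral_prod _ (hGy_meas.comp e.symm.measurable).aemeasurable
      have hinner : ∀ ω : Ω 0, ∫⁻ z, G y (e.symm (ω, z)) ∂P'
          ≤ (βf y)⁻¹ * ENNReal.ofReal (2 - ρ (y, ω)) := by
        intro ω
        have hl0 : 0 ≤ lamf (y, ω) := phi_nonneg (hρ01 ω).2
        have hl1 : lamf (y, ω) ≤ 1 := phi_le_one (hρ01 ω).2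
        have hcne : (ENNReal.ofReal (rexp ((1 - lamf (y, ω)) ^ 2 / 4))) ≠ ⊤ :=
          ENNReal.ofReal_ne_top
        rcases eq_or_lt_of_le hl0 with hl | hl
        · -- λ = 0
          have hρle : ρ (y, ω) ≤ rexp (-2⁻¹) := by
            by_cases hcase : rexp (-2⁻¹) ≤ ρ (y, ω)
            · have hval : lamf (y, ω) = 1 + 2 * Real.log (ρ (y, ω)) := by
                show phi (ρ (y, ω)) = _
                unfold phi; rw [if_pos hcase]
              have hρpos : 0 < ρ (y, ω) := lt_of_lt_of_le (exp_pos _) hcase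
              have hlog : Real.log (ρ (y, ω)) = -2⁻¹ := by
                rw [hval] at hl; linarith
              have : ρ (y, ω) = rexp (-2⁻¹) := by
                rw [← hlog, Real.exp_log hρpos]
              exact le_of_eq this
            · exact le_of_lt (lt_of_not_ge hcase)
          calc ∫⁻ z, G y (e.symm (ω, z)) ∂P'
              = ENNReal.ofReal (rexp ((1 - lamf (y, ω)) ^ 2 / 4)) * ∫⁻ z, G₂ y z ∂P' := by
                rw [← lintegral_const_mul' _ _ hcne]
                refine lintegral_congr fun z => ?_
                rw [hGval, ← hl, ENNReal.rpow_zero, mul_one, sub_zero, ENNReal.rpow_one]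
            _ ≤ ENNReal.ofReal (rexp ((1 - lamf (y, ω)) ^ 2 / 4)) * (βf y)⁻¹ :=
                mul_le_mul_right hG2int _
            _ ≤ ENNReal.ofReal (2 - ρ (y, ω)) * (βf y)⁻¹ := by
                refine mul_le_mul_left (ENNReal.ofReal_le_ofReal ?_) _
                rw [← hl]
                have := key0
                have := exp_pos (-2⁻¹ : ℝ)
                norm_num
                linarith
            _ = (βf y)⁻¹ * ENNReal.ofReal (2 - ρ (y, ω)) := mul_comm _ _
        · -- λ > 0
          have hif : rexp (-2⁻¹) ≤ ρ (y, ω) ∧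
              lamf (y, ω) = 1 + 2 * Real.log (ρ (y, ω)) := by
            by_cases hcase : rexp (-2⁻¹) ≤ ρ (y, ω)
            · exact ⟨hcase, by show phi (ρ (y, ω)) = _; unfold phi; rw [if_pos hcase]⟩
            · exfalso
              have h0 : lamf (y, ω) = 0 := by
                show phi (ρ (y, ω)) = 0; unfold phi; rw [if_neg hcase]
              rw [h0] at hl; exact lt_irrefl _ hl
          have hαpos : 0 < α (y, ω) := by
            rcases eq_or_lt_of_le (zero_le : 0 ≤ α (y, ω)) with h | h
            · exfalso
              have hρ0 : ρ (y, ω) = 0 := by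
                show (α (y, ω) / βf y).toReal = 0
                rw [← h, ENNReal.zero_div]; norm_num
              rw [hρ0] at hif
              have := exp_pos (-2⁻¹ : ℝ); linarith [hif.1]
            · exact h
          have hG1int : ∫⁻ z, G₁ (y, ω) z ∂P' ≤ (α (y, ω))⁻¹ := by
            have := (hG₁ (y, ω) hαpos).2
            exact this
          rcases eq_or_lt_of_le hl1 with hl1' | hl1'
          · -- λ = 1
            have hlog0 : Real.log (ρ (y, ω)) = 0 := by
              have h := hif.2
              rw [hl1'] at h
              linarith
            have hρ1 : ρ (y, ω) = 1 := by
              have hρpos : 0 < ρ (y, ω) := lt_of_lt_of_le (exp_pos _) hif.1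
              have := Real.exp_log hρpos
              rw [hlog0, Real.exp_zero] at this
              exact this.symm
            have hαβ : α (y, ω) = βf y := by
              have hd : α (y, ω) / βf y ≤ 1 := by
                calc α (y, ω) / βf y ≤ βf y / βf y := ENNReal.div_le_div_right (hαle ω) _
                  _ = 1 := ENNReal.div_self hβpos.ne' hβne
              have h1' : α (y, ω) / βf y = 1 := by
                have := (ENNReal.toReal_eq_one_iff _).1 hρ1
                exact this
              exact (ENNReal.div_eq_one_iff hβpos.ne' hβne).1 h1'
            calc ∫⁻ z, G y (e.symm (ω, z)) ∂P'
                = ∫⁻ z, G₁ (y, ω) z ∂P' := by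
                  refine lintegral_congr fun z => ?_
                  rw [hGval, hl1']
                  norm_num [Real.exp_zero]
              _ ≤ (α (y, ω))⁻¹ := hG1int
              _ = (βf y)⁻¹ * ENNReal.ofReal (2 - ρ (y, ω)) := by
                  rw [hαβ, hρ1]
                  norm_num
          · -- 0 < λ < 1 : Hölder
            have hlne : lamf (y, ω) ≠ 0 := ne_of_gt hl
            have h1lpos : 0 < 1 - lamf (y, ω) := by linarith
            have hpq : ((lamf (y, ω))⁻¹).HolderConjugate ((1 - lamf (y, ω))⁻¹) := by
              constructor
              · rw [inv_inv, inv_inv, inv_one]; ring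
              · exact inv_pos.mpr hl
              · exact inv_pos.mpr h1lpos
            have hmf : AEMeasurable (fun z => G₁ (y, ω) z ^ lamf (y, ω)) P' := by
              have : Measurable (G₁ (y, ω)) := by
                have h0 : (G₁ (y, ω)) = Function.uncurry G₁ ∘ Prod.mk (y, ω) := rfl
                rw [h0]
                exact hG₁m.comp measurable_prodMk_left
              exact (this.pow measurable_const).aemeasurable
            have hmg : AEMeasurable (fun z => G₂ y z ^ (1 - lamf (y, ω))) P' := by
              have : Measurable (G₂ y) := by
                have h0 : (G₂ y) = Function.uncurry G₂ ∘ Prod.mk y := rfl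
                rw [h0]
                exact hG₂m.comp measurable_prodMk_left
              exact (this.pow measurable_const).aemeasurable
            have hhold := ENNReal.lintegral_mul_le_Lp_mul_Lq P' hpq hmf hmg
            have hfp : ∀ z, (G₁ (y, ω) z ^ lamf (y, ω)) ^ ((lamf (y, ω))⁻¹) = G₁ (y, ω) z := by
              intro z
              rw [← ENNReal.rpow_mul, mul_inv_cancel₀ hlne, ENNReal.rpow_one]
            have hgq : ∀ z, (G₂ y z ^ (1 - lamf (y, ω))) ^ ((1 - lamf (y, ω))⁻¹) = G₂ y z := by
              intro z
              rw [← ENNReal.rpow_mul, mul_inv_cancel₀ h1lpos.ne', ENNReal.rpow_one]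
            have hhold2 : ∫⁻ z, G₁ (y, ω) z ^ lamf (y, ω) * G₂ y z ^ (1 - lamf (y, ω)) ∂P'
                ≤ (∫⁻ z, G₁ (y, ω) z ∂P') ^ lamf (y, ω)
                  * (∫⁻ z, G₂ y z ∂P') ^ (1 - lamf (y, ω)) := by
              have e1 : ∫⁻ z, G₁ (y, ω) z ^ lamf (y, ω) * G₂ y z ^ (1 - lamf (y, ω)) ∂P'
                  = ∫⁻ z, ((fun z => G₁ (y, ω) z ^ lamf (y, ω))
                    * (fun z => G₂ y z ^ (1 - lamf (y, ω)))) z ∂P' := rfl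
              have e2 : (∫⁻ z, (G₁ (y, ω) z ^ lamf (y, ω)) ^ ((lamf (y, ω))⁻¹) ∂P')
                  = ∫⁻ z, G₁ (y, ω) z ∂P' := lintegral_congr hfp
              have e3 : (∫⁻ z, (G₂ y z ^ (1 - lamf (y, ω))) ^ ((1 - lamf (y, ω))⁻¹) ∂P')
                  = ∫⁻ z, G₂ y z ∂P' := lintegral_congr hgq
              rw [e1]
              calc ∫⁻ z, ((fun z => G₁ (y, ω) z ^ lamf (y, ω))
                    * (fun z => G₂ y z ^ (1 - lamf (y, ω)))) z ∂P'
                  ≤ (∫⁻ z, (G₁ (y, ω) z ^ lamf (y, ω)) ^ ((lamf (y, ω))⁻¹) ∂P')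
                      ^ (1 / (lamf (y, ω))⁻¹)
                    * (∫⁻ z, (G₂ y z ^ (1 - lamf (y, ω))) ^ ((1 - lamf (y, ω))⁻¹) ∂P')
                      ^ (1 / (1 - lamf (y, ω))⁻¹) := hhold
                _ = (∫⁻ z, G₁ (y, ω) z ∂P') ^ lamf (y, ω)
                    * (∫⁻ z, G₂ y z ∂P') ^ (1 - lamf (y, ω)) := by
                    rw [e2, e3, one_div, inv_inv, one_div, inv_inv]
            calc ∫⁻ z, G y (e.symm (ω, z)) ∂P'
                = ENNReal.ofReal (rexp ((1 - lamf (y, ω)) ^ 2 / 4))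
                  * ∫⁻ z, G₁ (y, ω) z ^ lamf (y, ω) * G₂ y z ^ (1 - lamf (y, ω)) ∂P' := by
                  rw [← lintegral_const_mul' _ _ hcne]
                  refine lintegral_congr fun z => ?_
                  rw [hGval]
                  ring
              _ ≤ ENNReal.ofReal (rexp ((1 - lamf (y, ω)) ^ 2 / 4))
                  * ((∫⁻ z, G₁ (y, ω) z ∂P') ^ lamf (y, ω)
                    * (∫⁻ z, G₂ y z ∂P') ^ (1 - lamf (y, ω))) :=
                  mul_le_mul_right hhold2 _
              _ ≤ ENNReal.ofReal (rexp ((1 - lamf (y, ω)) ^ 2 / 4))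
                  * ((α (y, ω))⁻¹ ^ lamf (y, ω) * (βf y)⁻¹ ^ (1 - lamf (y, ω))) := by
                  refine mul_le_mul_right (mul_le_mul'
                    (ENNReal.rpow_le_rpow hG1int hl0)
                    (ENNReal.rpow_le_rpow hG2int (by linarith))) _
              _ ≤ (βf y)⁻¹ * ENNReal.ofReal (2 - ρ (y, ω)) :=
                  key3E hαpos hβ1 (hαle ω) hif.2 hif.1
      -- outer integral
      have hbinv_ne : (βf y)⁻¹ ≠ ⊤ := ENNReal.inv_ne_top.2 hβpos.ne'
      have hd1 : ∀ ω : Ω 0, α (y, ω) / βf y ≤ 1 := by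
        intro ω
        calc α (y, ω) / βf y ≤ βf y / βf y := ENNReal.div_le_div_right (hαle ω) _
          _ = 1 := ENNReal.div_self hβpos.ne' hβne
      have hval : ∀ ω : Ω 0, ENNReal.ofReal (2 - ρ (y, ω)) = 2 - α (y, ω) / βf y := by
        intro ω
        have hdne : α (y, ω) / βf y ≠ ⊤ := (lt_of_le_of_lt (hd1 ω) (by norm_num)).ne
        have h5 : ENNReal.ofReal (2 - ρ (y, ω)) + ENNReal.ofReal (ρ (y, ω)) = 2 := by
          rw [← ENNReal.ofReal_add (by linarith [(hρ01 ω).2]) (hρ01 ω).1]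
          norm_num
        have h6 : ENNReal.ofReal (ρ (y, ω)) = α (y, ω) / βf y := ENNReal.ofReal_toReal hdne
        rw [h6] at h5
        exact ENNReal.eq_sub_of_add_eq hdne h5
      have hmeasαβ : Measurable fun ω : Ω 0 => α (y, ω) / βf y := by
        have h0 : Measurable fun ω : Ω 0 => α (y, ω) := by
          have h0' : (fun ω : Ω 0 => α (y, ω)) = α ∘ Prod.mk y := rfl
          rw [h0']
          exact mα.comp measurable_prodMk_left
        exact h0.div_const _
      have hintα : ∫⁻ ω, α (y, ω) ∂μ0 = Measure.pi μ A2 := by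
        have hcongr : ∀ ω : Ω 0, α (y, ω) = P' (Prod.mk ω ⁻¹' (e.symm ⁻¹' A2)) := by
          intro ω
          rw [hsecesymm]
          show P' (Prod.mk (y, ω) ⁻¹' T1) = _
          rw [hsecT1]
          rfl
        rw [lintegral_congr hcongr, ← Measure.prod_apply (mA2.preimage e.symm.measurable),
          hment _ mA2]
      have hfin : ∫⁻ ω, α (y, ω) / βf y ∂μ0 ≠ ⊤ := by
        have hle1 : ∫⁻ ω, α (y, ω) / βf y ∂μ0 ≤ 1 := by
          calc ∫⁻ ω, α (y, ω) / βf y ∂μ0 ≤ ∫⁻ _, 1 ∂μ0 := lintegral_mono fun ω => hd1 ω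
            _ = 1 := by rw [lintegral_one, measure_univ]
        exact (lt_of_le_of_lt hle1 (by norm_num)).ne
      have hsubint : ∫⁻ ω, (2 - α (y, ω) / βf y) ∂μ0
          = 2 - ∫⁻ ω, α (y, ω) / βf y ∂μ0 := by
        rw [lintegral_sub hmeasαβ hfin
          (Filter.Eventually.of_forall fun ω => le_trans (hd1 ω) one_le_two)]
        congr 1
        rw [lintegral_const, measure_univ, mul_one]
      have hdivint : ∫⁻ ω, α (y, ω) / βf y ∂μ0 = Measure.pi μ A2 / βf y := by
        simp_rw [div_eq_mul_inv]
        rw [lintegral_mul_const' _ _ hbinv_ne, hintα]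
      calc ∫⁻ x, G y x ∂(Measure.pi μ)
          = ∫⁻ ω, ∫⁻ z, G y (e.symm (ω, z)) ∂P' ∂μ0 := by rw [h1, h2]
        _ ≤ ∫⁻ ω, (βf y)⁻¹ * ENNReal.ofReal (2 - ρ (y, ω)) ∂μ0 := lintegral_mono hinner
        _ = (βf y)⁻¹ * ∫⁻ ω, ENNReal.ofReal (2 - ρ (y, ω)) ∂μ0 :=
            lintegral_const_mul' _ _ hbinv_ne
        _ = (βf y)⁻¹ * (2 - Measure.pi μ A2 / βf y) := by
            rw [lintegral_congr hval, hsubint, hdivint]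
        _ ≤ (Measure.pi μ A2)⁻¹ := key4E hPA2pos hA2β hβ1
        _ = (Measure.pi μ {x | (y, x) ∈ S})⁻¹ := by rw [hPA2]

end TalAux

open TalAux in
/-- Concentration around a median for functions satisfying the one-sided Lipschitz condition
`F(x) ≤ F(y) + d_a(x, y)` with respect to a weighted Hamming distance with unit-norm weight
depending on `x`: for a product probability measure `P = μ_1 ⊗ ⋯ ⊗ μ_n` and a median `M`
of `F`, `P(|F − M| ≥ r) ≤ 4 e^{−r²/4}` for all `r ≥ 0`. -/
theorem convex_distance_concentration_median {n : ℕ} {Ω : Fin n → Type*}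
    [∀ i, MeasurableSpace (Ω i)]
    (μ : ∀ i, Measure (Ω i)) [∀ i, IsProbabilityMeasure (μ i)]
    (F : (∀ i, Ω i) → ℝ) (hFmeas : Measurable F)
    (hF : ∀ x, ∃ a : Fin n → ℝ, (∀ i, 0 ≤ a i) ∧ (∑ i, (a i) ^ 2 = 1) ∧
      ∀ y, F x ≤ F y + ∑ i, a i * (if x i ≠ y i then 1 else 0))
    (M : ℝ) (hM1 : 1 / 2 ≤ Measure.pi μ {x | M ≤ F x})
    (hM2 : 1 / 2 ≤ Measure.pi μ {x | F x ≤ M})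
    (r : ℝ) (hr : 0 ≤ r) :
    Measure.pi μ {x | r ≤ |F x - M|} ≤ ENNReal.ofReal (4 * Real.exp (-r ^ 2 / 4)) := by
  classical
  set P := Measure.pi μ with hP
  set A1 : Set (∀ i, Ω i) := {x | F x ≤ M} with hA1
  set A2 : Set (∀ i, Ω i) := {x | M ≤ F x} with hA2
  set Sp : Set (∀ i, Ω i) := {x | M + r ≤ F x} with hSp
  set Sm : Set (∀ i, Ω i) := {x | F x ≤ M - r} with hSm
  have mA1 : MeasurableSet A1 := measurableSet_le hFmeas measurable_const
  have mA2 : MeasurableSet A2 := measurableSet_le measurable_const hFmeas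
  have mSp : MeasurableSet Sp := measurableSet_le measurable_const hFmeas
  have mSm : MeasurableSet Sm := measurableSet_le hFmeas measurable_const
  have hP1 : 0 < P A1 := lt_of_lt_of_le (by norm_num) hM2
  have hP2 : 0 < P A2 := lt_of_lt_of_le (by norm_num) hM1
  have hA1ne : A1.Nonempty := by
    rcases Set.eq_empty_or_nonempty A1 with h | h
    · rw [h] at hP1; simp at hP1
    · exact h
  have hcpos : (0:ℝ) < rexp (r ^ 2 / 4) := exp_pos _
  have hcinv : (ENNReal.ofReal (rexp (r ^ 2 / 4)))⁻¹ = ENNReal.ofReal (rexp (-r ^ 2 / 4)) := by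
    rw [← ENNReal.ofReal_inv_of_pos hcpos, ← Real.exp_neg, neg_div]
  have hcne0 : ENNReal.ofReal (rexp (r ^ 2 / 4)) ≠ 0 := by
    simp [ENNReal.ofReal_eq_zero, not_le, hcpos]
  have hcnetop : ENNReal.ofReal (rexp (r ^ 2 / 4)) ≠ ⊤ := ENNReal.ofReal_ne_top
  -- upper tail
  have hup : P Sp ≤ 2 * ENNReal.ofReal (rexp (-r ^ 2 / 4)) := by
    obtain ⟨G, hGm, hGy⟩ := main n Ω μ PUnit {p : PUnit × (∀ i, Ω i) | p.2 ∈ A1}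
      (mA1.preimage measurable_snd)
    have hsetEq : {x | (PUnit.unit, x) ∈ {p : PUnit × (∀ i, Ω i) | p.2 ∈ A1}} = A1 := rfl
    obtain ⟨hpt, hint⟩ := hGy PUnit.unit (by rw [hsetEq]; exact hP1)
    rw [hsetEq] at hpt hint
    have hint2 : ∫⁻ x, G PUnit.unit x ∂P ≤ 2 := by
      refine le_trans hint ?_
      calc (P A1)⁻¹ ≤ ((1:ℝ≥0∞)/2)⁻¹ := ENNReal.inv_le_inv' hM2
        _ = 2 := by simp
    have hptSp : ∀ x ∈ Sp, ENNReal.ofReal (rexp (r ^ 2 / 4)) ≤ G PUnit.unit x := by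
      intro x hx
      obtain ⟨a, ha0, ha1, hlip⟩ := hF x
      have hsq : ∀ c ∈ Dset A1 x, r ^ 2 ≤ c := by
        refine sq_le_of_mem_Dset (Fx := F x) (K := M) ha0 ha1 (fun y hy => ?_) hr ?_
        · have h1 := hlip y
          have h2 : F y ≤ M := hy
          have h3 : ∑ i, a i * (if x i ≠ y i then (1:ℝ) else 0) = ∑ i, a i * ham x y i := rfl
          rw [h3] at h1
          linarith
        · have : M + r ≤ F x := hx
          linarith
      have htf : r ^ 2 ≤ tfun A1 x := le_csInf (Dset_nonempty hA1ne x) hsq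
      refine le_trans (ENNReal.ofReal_le_ofReal ?_) (hpt x)
      apply Real.exp_le_exp.2
      linarith
    have hmarkov : ENNReal.ofReal (rexp (r ^ 2 / 4)) * P Sp ≤ 2 := by
      calc ENNReal.ofReal (rexp (r ^ 2 / 4)) * P Sp
          = ∫⁻ _ in Sp, ENNReal.ofReal (rexp (r ^ 2 / 4)) ∂P := (setLIntegral_const _ _).symm
        _ ≤ ∫⁻ x in Sp, G PUnit.unit x ∂P := by
            refine setLIntegral_mono ?_ hptSp
            have h0 : (G PUnit.unit) = Function.uncurry G ∘ Prod.mk PUnit.unit := rfl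
            rw [h0]
            exact hGm.comp measurable_prodMk_left
        _ ≤ ∫⁻ x, G PUnit.unit x ∂P := setLIntegral_le_lintegral _ _
        _ ≤ 2 := hint2
    have := (ENNReal.mul_le_iff_le_inv hcne0 hcnetop).1 hmarkov
    rw [hcinv] at this
    calc P Sp ≤ ENNReal.ofReal (rexp (-r ^ 2 / 4)) * 2 := this
      _ = 2 * ENNReal.ofReal (rexp (-r ^ 2 / 4)) := mul_comm _ _
  -- lower tail
  have hlow : P Sm ≤ 2 * ENNReal.ofReal (rexp (-r ^ 2 / 4)) := by
    rcases eq_or_lt_of_le (zero_le : 0 ≤ P Sm) with h0 | hPSm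
    · rw [← h0]; exact zero_le
    have hSmne : Sm.Nonempty := by
      rcases Set.eq_empty_or_nonempty Sm with h | h
      · rw [h] at hPSm; simp at hPSm
      · exact h
    obtain ⟨G, hGm, hGy⟩ := main n Ω μ PUnit {p : PUnit × (∀ i, Ω i) | p.2 ∈ Sm}
      (mSm.preimage measurable_snd)
    have hsetEq : {x | (PUnit.unit, x) ∈ {p : PUnit × (∀ i, Ω i) | p.2 ∈ Sm}} = Sm := rfl
    obtain ⟨hpt, hint⟩ := hGy PUnit.unit (by rw [hsetEq]; exact hPSm)
    rw [hsetEq] at hpt hint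
    have hptA2 : ∀ x ∈ A2, ENNReal.ofReal (rexp (r ^ 2 / 4)) ≤ G PUnit.unit x := by
      intro x hx
      obtain ⟨a, ha0, ha1, hlip⟩ := hF x
      have hsq : ∀ c ∈ Dset Sm x, r ^ 2 ≤ c := by
        refine sq_le_of_mem_Dset (Fx := F x) (K := M - r) ha0 ha1 (fun y hy => ?_) hr ?_
        · have h1 := hlip y
          have h2 : F y ≤ M - r := hy
          have h3 : ∑ i, a i * (if x i ≠ y i then (1:ℝ) else 0) = ∑ i, a i * ham x y i := rfl
          rw [h3] at h1
          linarith
        · have : M ≤ F x := hx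
          linarith
      have htf : r ^ 2 ≤ tfun Sm x := le_csInf (Dset_nonempty hSmne x) hsq
      refine le_trans (ENNReal.ofReal_le_ofReal ?_) (hpt x)
      apply Real.exp_le_exp.2
      linarith
    have hmarkov : ENNReal.ofReal (rexp (r ^ 2 / 4)) * P A2 ≤ (P Sm)⁻¹ := by
      calc ENNReal.ofReal (rexp (r ^ 2 / 4)) * P A2
          = ∫⁻ _ in A2, ENNReal.ofReal (rexp (r ^ 2 / 4)) ∂P := (setLIntegral_const _ _).symm
        _ ≤ ∫⁻ x in A2, G PUnit.unit x ∂P := by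
            refine setLIntegral_mono ?_ hptA2
            have h0 : (G PUnit.unit) = Function.uncurry G ∘ Prod.mk PUnit.unit := rfl
            rw [h0]
            exact hGm.comp measurable_prodMk_left
        _ ≤ ∫⁻ x, G PUnit.unit x ∂P := setLIntegral_le_lintegral _ _
        _ ≤ (P Sm)⁻¹ := hint
    have hstep : P Sm ≤ (ENNReal.ofReal (rexp (r ^ 2 / 4)) * P A2)⁻¹ := by
      rw [ENNReal.le_inv_iff_mul_le]
      rw [mul_comm]
      rw [← ENNReal.le_inv_iff_mul_le]
      exact hmarkov
    refine le_trans hstep ?_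
    calc (ENNReal.ofReal (rexp (r ^ 2 / 4)) * P A2)⁻¹
        ≤ (ENNReal.ofReal (rexp (r ^ 2 / 4)) * (1/2))⁻¹ :=
          ENNReal.inv_le_inv' (mul_le_mul_right hM1 _)
      _ = (ENNReal.ofReal (rexp (r ^ 2 / 4)))⁻¹ * ((1:ℝ≥0∞)/2)⁻¹ := by
          rw [ENNReal.mul_inv (Or.inl hcne0) (Or.inl hcnetop)]
      _ = 2 * ENNReal.ofReal (rexp (-r ^ 2 / 4)) := by
          rw [hcinv]
          simp [mul_comm]
  -- combine
  have hsub : {x | r ≤ |F x - M|} ⊆ Sp ∪ Sm := by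
    intro x hx
    have h1 : r ≤ |F x - M| := hx
    rcases abs_cases (F x - M) with ⟨he, _⟩ | ⟨he, _⟩
    · left
      have : r ≤ F x - M := by rw [he] at h1; exact h1
      show M + r ≤ F x
      linarith
    · right
      have : r ≤ -(F x - M) := by rw [he] at h1; exact h1
      show F x ≤ M - r
      linarith
  calc P {x | r ≤ |F x - M|} ≤ P (Sp ∪ Sm) := measure_mono hsub
    _ ≤ P Sp + P Sm := measure_union_le _ _
    _ ≤ 2 * ENNReal.ofReal (rexp (-r ^ 2 / 4)) + 2 * ENNReal.ofReal (rexp (-r ^ 2 / 4)) :=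
        add_le_add hup hlow
    _ = 4 * ENNReal.ofReal (rexp (-r ^ 2 / 4)) := by ring
    _ = ENNReal.ofReal (4 * rexp (-r ^ 2 / 4)) := by
        rw [ENNReal.ofReal_mul (by norm_num : (0:ℝ) ≤ 4)]
        norm_num
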